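/- Let C be a commutative ternary group with identity pair (Q₀, R₀). Let G be the set of formal symbols P·Q* (P, Q ∈ C) modulo the relation P·Q* ∼ R·S* iff P·Q*·R₀ = R·S*·R₀. Then G is an abelian group under (P·Q*)·(R·S*) := ((P·Q*·R)·S*) with identity R₀·Q₀*, and G acts transitively on C via (P·Q*)·R := P·Q*·R. -/
import Mathlib


/-- From a commutative ternary group `C` with triple product `op` and identity pair
`(Q₀, R₀)`, the formal symbols `P·Q*` (pairs `(P,Q)`) modulo the relation
`P·Q* ∼ R·S* ↔ P·Q*·R₀ = R·S*·R₀` form an abelian group under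
`(P·Q*)·(R·S*) := (P·Q*·R)·S*` with identity `R₀·Q₀*`, acting transitively on `C`
via `(P·Q*)·R := P·Q*·R`. -/
theorem ternary_group_acting_group {C : Type*} (op : C → C → C → C)
    (hcomm : ∀ P Q R, op P Q R = op R Q P)
    (hassoc : ∀ P Q R S T, op (op P Q R) S T = op P Q (op R S T))
    (Q0 R0 : C)
    (hid : ∀ P, op P Q0 R0 = P)
    (hinv : ∀ P, ∃ R, op P Q0 R = R0)
    (rel : C × C → C × C → Prop)
    (hrel : ∀ g h, rel g h ↔ op g.1 g.2 R0 = op h.1 h.2 R0)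
    (mul : C × C → C × C → C × C)
    (hmul : ∀ g h, mul g h = (op g.1 g.2 h.1, h.2))
    (act : C × C → C → C)
    (hact : ∀ g P, act g P = op g.1 g.2 P) :
    -- `rel` is an equivalence relation
    Equivalence rel ∧
    -- multiplication is well defined modulo `rel`
    (∀ g g' h h', rel g g' → rel h h' → rel (mul g h) (mul g' h')) ∧
    -- commutativity and associativity
    (∀ g h, rel (mul g h) (mul h g)) ∧
    (∀ g h i, rel (mul (mul g h) i) (mul g (mul h i))) ∧
    -- identity `R₀·Q₀*` and inverses
    (∀ g, rel (mul (R0, Q0) g) g ∧ rel (mul g (R0, Q0)) g) ∧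
    (∀ g, ∃ g', rel (mul g g') (R0, Q0)) ∧
    -- the action is well defined, compatible with multiplication, and transitive
    (∀ g g', rel g g' → ∀ P, act g P = act g' P) ∧
    (∀ g h P, act (mul g h) P = act g (act h P)) ∧
    (∀ P, act (R0, Q0) P = P) ∧
    (∀ P Q, ∃ g, act g P = Q) := by
  -- key lemma: `op a b P` depends on `(a,b)` only through `op a b R0`
  have key : ∀ a b P, op a b P = op (op a b R0) Q0 P := by
    intro a b P
    rw [hassoc, hcomm R0, hid]
  -- binary operation `x ⋆ y := op x Q0 y` on representatives
  have bcomm : ∀ x y, op x Q0 y = op y Q0 x := fun x y => hcomm x Q0 y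
  have bassoc : ∀ x y z, op (op x Q0 y) Q0 z = op x Q0 (op y Q0 z) :=
    fun x y z => hassoc x Q0 y Q0 z
  have bid : ∀ x, op R0 Q0 x = x := by
    intro x; rw [bcomm, hid]
  -- representative of a product
  have mr : ∀ g h, op (mul g h).1 (mul g h).2 R0
      = op (op g.1 g.2 R0) Q0 (op h.1 h.2 R0) := by
    intro g h
    rw [hmul]
    simp only
    rw [hassoc, ← key]
  refine ⟨⟨fun g => (hrel g g).2 rfl,
      fun h => (hrel _ _).2 ((hrel _ _).1 h).symm,
      fun h1 h2 => (hrel _ _).2 (((hrel _ _).1 h1).trans ((hrel _ _).1 h2))⟩,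
      ?_, ?_, ?_, ?_, ?_, ?_, ?_, ?_, ?_⟩
  · intro g g' h h' hg hh
    rw [hrel, mr, mr, (hrel g g').1 hg, (hrel h h').1 hh]
  · intro g h
    rw [hrel, mr, mr, bcomm]
  · intro g h i
    rw [hrel, mr, mr, mr, mr, bassoc]
  · intro g
    constructor
    · rw [hrel, mr]
      simp only
      rw [hid, bid]
    · rw [hrel, mr]
      simp only
      rw [hid, bcomm, bid]
  · intro g
    obtain ⟨R, hR⟩ := hinv (op g.1 g.2 R0)
    refine ⟨(R, Q0), ?_⟩
    rw [hrel, mr]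
    simp only
    rw [hid, hid, hR]
  · intro g g' hg P
    rw [hact, hact, key, key g'.1, (hrel g g').1 hg]
  · intro g h P
    rw [hact, hact, hact, hmul]
    simp only
    rw [hassoc]
  · intro P
    rw [hact]
    simp only
    exact bid P
  · intro P Q
    obtain ⟨R, hR⟩ := hinv P
    refine ⟨(op Q Q0 R, Q0), ?_⟩
    rw [hact]
    simp only
    rw [hassoc, hcomm R, hR, hid]
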